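/- S_{G,E} is an inverse semigroup with zero: the multiplication is well defined (the two defining cases agree when both apply) and associative; every s ∈ S_{G,E} satisfies s s* s = s and s* s s* = s*; and any two idempotents of S_{G,E} commute. -/

import Mathlib

/-- Finite paths in a directed graph: `Pth.nil x` is the length-zero path at the
vertex `x`, and `Pth.cons e p` is the path whose first edge is `e`, followed by `p`. -/
inductive Pth (V : Type) (Ed : Type) : Type where
  | nil : V → Pth V Ed
  | cons : Ed → Pth V Ed → Pth V Ed

/-- A self-similar graph `(G, E, φ)`: a group `G` acting on a directed graph `E`
(with vertex set `V`, edge set `Ed`, range `r` and source `d`) by graph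
automorphisms, together with a one-cocycle `φ : G × E¹ → G` for the action on
edges, satisfying `φ(g,e)·x = g·x` for all vertices `x`. -/
structure SelfSimGraph (G V Ed : Type) [Group G] : Type where
  r : Ed → V
  d : Ed → V
  actV : G → V → V
  actE : G → Ed → Ed
  actV_one : ∀ x, actV 1 x = x
  actV_mul : ∀ g h x, actV (g * h) x = actV g (actV h x)
  actE_one : ∀ e, actE 1 e = e
  actE_mul : ∀ g h e, actE (g * h) e = actE g (actE h e)
  r_act : ∀ g e, r (actE g e) = actV g (r e)
  d_act : ∀ g e, d (actE g e) = actV g (d e)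
  phi : G → Ed → G
  phi_cocycle : ∀ g h e, phi (g * h) e = phi g (actE h e) * phi h e
  phi_vertex : ∀ g e x, actV (phi g e) x = actV g x

variable {G V Ed : Type} [Group G]

/-- The range `r(α)` of a finite path. -/
def rngP (S : SelfSimGraph G V Ed) : Pth V Ed → V
  | Pth.nil x => x
  | Pth.cons e _ => S.r e

/-- The source `d(α)` of a finite path. -/
def srcP (S : SelfSimGraph G V Ed) : Pth V Ed → V
  | Pth.nil x => x
  | Pth.cons _ p => srcP S p

/-- Well-formedness of a finite path: consecutive edges match, `d(αᵢ) = r(αᵢ₊₁)`. -/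
def WFP (S : SelfSimGraph G V Ed) : Pth V Ed → Prop
  | Pth.nil _ => True
  | Pth.cons e p => S.d e = rngP S p ∧ WFP S p

/-- The length of a finite path. -/
def lenP : Pth V Ed → ℕ
  | Pth.nil _ => 0
  | Pth.cons _ p => lenP p + 1

/-- Concatenation `αβ` of finite paths (meaningful when `d(α) = r(β)`). -/
def compP : Pth V Ed → Pth V Ed → Pth V Ed
  | Pth.nil _, q => q
  | Pth.cons e p, q => Pth.cons e (compP p q)

/-- The action of `G` extended to finite paths:
`g·x = g·x` on vertices and `g·(eα) = (g·e)(φ(g,e)·α)`. -/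
def actP (S : SelfSimGraph G V Ed) : G → Pth V Ed → Pth V Ed
  | g, Pth.nil x => Pth.nil (S.actV g x)
  | g, Pth.cons e p => Pth.cons (S.actE g e) (actP S (S.phi g e) p)

/-- The cocycle extended to finite paths:
`φ(g,x) = g` on vertices and `φ(g, eα) = φ(φ(g,e), α)`. -/
def phiP (S : SelfSimGraph G V Ed) : G → Pth V Ed → G
  | g, Pth.nil _ => g
  | g, Pth.cons e p => phiP S (S.phi g e) p

/-- A path `τ` is strongly fixed by `g` if `g·τ = τ` and `φ(g,τ) = 1`. -/
def StronglyFixed (S : SelfSimGraph G V Ed) (g : G) (τ : Pth V Ed) : Prop :=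
  WFP S τ ∧ actP S g τ = τ ∧ phiP S g τ = 1

/-- `(G,E,φ)` is pseudo free if `g·e = e` and `φ(g,e) = 1` imply `g = 1`. -/
def PseudoFree (S : SelfSimGraph G V Ed) : Prop :=
  ∀ (g : G) (e : Ed), S.actE g e = e → S.phi g e = 1 → g = 1

/-- `p` is a prefix (initial segment) of `q`: `q = pε` for some path `ε`. -/
def IsPrefixP (S : SelfSimGraph G V Ed) (p q : Pth V Ed) : Prop :=
  ∃ ε, WFP S ε ∧ rngP S ε = srcP S p ∧ compP p ε = q

/-- The set `M_g` of minimal strongly fixed paths for `g`: strongly fixed paths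
none of whose proper prefixes is strongly fixed. -/
def MinSF (S : SelfSimGraph G V Ed) (g : G) : Set (Pth V Ed) :=
  {μ | StronglyFixed S g μ ∧ ∀ p, IsPrefixP S p μ → p ≠ μ → ¬StronglyFixed S g p}

/-- Well-formedness of an infinite path, viewed as a sequence of edges:
`d(ξᵢ) = r(ξᵢ₊₁)`. -/
def InfWF (S : SelfSimGraph G V Ed) (ξ : ℕ → Ed) : Prop :=
  ∀ i, S.d (ξ i) = S.r (ξ (i + 1))

/-- The range `r(ξ)` of an infinite path. -/
def rngInf (S : SelfSimGraph G V Ed) (ξ : ℕ → Ed) : V := S.r (ξ 0)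

/-- `takeP S ξ n` is the finite path `ξ|ₙ = ξ₁⋯ξₙ` (with `ξ|₀ = r(ξ₁)`). -/
def takeP (S : SelfSimGraph G V Ed) : (ℕ → Ed) → ℕ → Pth V Ed
  | ξ, 0 => Pth.nil (S.r (ξ 0))
  | ξ, n + 1 => Pth.cons (ξ 0) (takeP S (fun i => ξ (i + 1)) n)

/-- Membership of an infinite path in the cylinder `Z(α)`:
the initial segment of `ξ` of length `|α|` equals `α`. -/
def InZ (S : SelfSimGraph G V Ed) (α : Pth V Ed) (ξ : ℕ → Ed) : Prop :=
  takeP S ξ (lenP α) = α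

/-- The infinite path `αξ` obtained by prepending a finite path to an infinite one. -/
def prepSeq : Pth V Ed → (ℕ → Ed) → ℕ → Ed
  | Pth.nil _, ξ, n => ξ n
  | Pth.cons e _, _, 0 => e
  | Pth.cons _ p, ξ, n + 1 => prepSeq p ξ n

/-- Dropping the first `k` edges of an infinite path. -/
def dropSeq (k : ℕ) (ξ : ℕ → Ed) : ℕ → Ed := fun n => ξ (n + k)

/-- The space `E^∞` of infinite paths. -/
def InfPath (S : SelfSimGraph G V Ed) : Type := {ξ : ℕ → Ed // InfWF S ξ}

/-- The topology of `E^∞`: the subspace topology induced from the product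
topology on `(E¹)^ℕ`, `E¹` being discrete.  Its basis consists of the
cylinders `Z(α)`. -/
def infTop (S : SelfSimGraph G V Ed) : TopologicalSpace (InfPath S) :=
  TopologicalSpace.induced (fun ξ => ξ.1)
    (@Pi.topologicalSpace ℕ (fun _ => Ed) (fun _ => ⊥))

/-- Specification of the (unique) action of `G` on `E^∞`: `(g·ξ)|ₙ = g·(ξ|ₙ)`. -/
def ActSpec (S : SelfSimGraph G V Ed) (act : G → (ℕ → Ed) → ℕ → Ed) : Prop :=
  ∀ (g : G) (ξ : ℕ → Ed) (n : ℕ), takeP S (act g ξ) n = actP S g (takeP S ξ n)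

/-- The action of a triple `s = (α, g, β) ∈ S_{G,E}` on `E^∞`: it sends
`βξ ∈ Z(β)` to `α(g·ξ)`. -/
def sActSeq (S : SelfSimGraph G V Ed) (act : G → (ℕ → Ed) → ℕ → Ed)
    (α : Pth V Ed) (g : G) (β : Pth V Ed) (ξ : ℕ → Ed) : ℕ → Ed :=
  prepSeq α (act g (dropSeq (lenP β) ξ))

/-- The set of fixed points in `E^∞` of the element `s = (α, g, β)` of `S_{G,E}`. -/
def FixSet (S : SelfSimGraph G V Ed) (act : G → (ℕ → Ed) → ℕ → Ed)
    (α : Pth V Ed) (g : G) (β : Pth V Ed) : Set (InfPath S) :=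
  {η | InZ S β η.1 ∧ sActSeq S act α g β η.1 = η.1}

/-- A vertex `x` is simple if `r⁻¹(x)` is a singleton. -/
def SimpleVtx (S : SelfSimGraph G V Ed) (x : V) : Prop := ∃! e : Ed, S.r e = x

/-- A path `γ = γ₁⋯γₙ` has no entry if `d(γᵢ)` is simple for every `i`. -/
def NoEntry (S : SelfSimGraph G V Ed) : Pth V Ed → Prop
  | Pth.nil _ => True
  | Pth.cons e p => SimpleVtx S (S.d e) ∧ NoEntry S p

/-- A circuit: a path `γ` of nonzero length with `d(γ) = r(γ)`. -/
def Circuit (S : SelfSimGraph G V Ed) (γ : Pth V Ed) : Prop :=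
  WFP S γ ∧ 1 ≤ lenP γ ∧ srcP S γ = rngP S γ

/-- A `G`-circuit: a pair `(g,γ)` with `γ` of nonzero length and `d(γ) = g·r(γ)`. -/
def GCircuit (S : SelfSimGraph G V Ed) (g : G) (γ : Pth V Ed) : Prop :=
  WFP S γ ∧ 1 ≤ lenP γ ∧ srcP S γ = S.actV g (rngP S γ)

/-- `g` is slack at `x` if all sufficiently long paths with range `x` are
strongly fixed by `g`. -/
def SlackAt (S : SelfSimGraph G V Ed) (g : G) (x : V) : Prop :=
  ∃ n : ℕ, ∀ γ, WFP S γ → rngP S γ = x → n ≤ lenP γ → StronglyFixed S g γ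

/-- The sequence `(γⁿ, gₙ)` attached to a `G`-circuit `(g, γ)`:
`γ¹ = γ`, `g₁ = g`, `γⁿ⁺¹ = gₙ·γⁿ`, `gₙ₊₁ = φ(gₙ, γⁿ)` (indexed from `0`). -/
def circIter (S : SelfSimGraph G V Ed) (g : G) (γ : Pth V Ed) : ℕ → Pth V Ed × G
  | 0 => (γ, g)
  | n + 1 =>
      (actP S (circIter S g γ n).2 (circIter S g γ n).1,
       phiP S (circIter S g γ n).2 (circIter S g γ n).1)

/-- The finite concatenation `γ¹γ²⋯γⁿ`. -/
def circConcat (S : SelfSimGraph G V Ed) (g : G) (γ : Pth V Ed) : ℕ → Pth V Ed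
  | 0 => Pth.nil (rngP S γ)
  | n + 1 => compP (circConcat S g γ n) (circIter S g γ n).1

/-- `ξ` is the infinite concatenation `ξ(g,γ) = γ¹γ²γ³⋯`: it is an infinite path
whose initial segments are the finite concatenations `γ¹⋯γⁿ`. -/
def IsCircPath (S : SelfSimGraph G V Ed) (g : G) (γ : Pth V Ed) (ξ : ℕ → Ed) : Prop :=
  InfWF S ξ ∧ ∀ n, takeP S ξ (lenP (circConcat S g γ n)) = circConcat S g γ n

/-- `x ⇀ y`: there is a finite path with source `x` and range `y`. -/
def RelPath (S : SelfSimGraph G V Ed) (x y : V) : Prop :=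
  ∃ α, WFP S α ∧ srcP S α = x ∧ rngP S α = y

/-- `x ∼ y`: `x` and `y` are in the same `G`-orbit. -/
def RelOrb (S : SelfSimGraph G V Ed) (x y : V) : Prop :=
  ∃ g : G, S.actV g x = y

/-- `x ≫ y`: there is a vertex `u` with `x ⇀ u ∼ y`. -/
def RelGG (S : SelfSimGraph G V Ed) (x y : V) : Prop :=
  ∃ u, RelPath S x u ∧ RelOrb S u y

/-- A nonzero element `(α, g, β)` of `S_{G,E}`: `α, β ∈ E*`, `g ∈ G`, with
`d(α) = g·d(β)`. -/
def SGETriple (S : SelfSimGraph G V Ed) : Type :=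
  {t : Pth V Ed × G × Pth V Ed //
    WFP S t.1 ∧ WFP S t.2.2 ∧ srcP S t.1 = S.actV t.2.1 (srcP S t.2.2)}

/-- The inverse semigroup `S_{G,E}` (as a set): the triples together with `0 = none`. -/
def SGE (S : SelfSimGraph G V Ed) : Type := Option (SGETriple S)

/-- Forget the membership proofs. -/
def sgeToRaw (S : SelfSimGraph G V Ed) : SGE S → Option (Pth V Ed × G × Pth V Ed) :=
  Option.map Subtype.val

/-- The adjoint: `(α, g, β)* = (β, g⁻¹, α)`, `0* = 0`. -/
def starSGE (S : SelfSimGraph G V Ed) : SGE S → SGE S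
  | none => none
  | some s =>
      some ⟨(s.1.2.2, s.1.2.1⁻¹, s.1.1),
        ⟨s.2.2.1, s.2.1, by
          rw [s.2.2.2, ← S.actV_mul, inv_mul_cancel, S.actV_one]⟩⟩

/-- The idempotent `f_α = (α, 1, α)`. -/
def fIdem (S : SelfSimGraph G V Ed) (α : Pth V Ed) (h : WFP S α) : SGE S :=
  some ⟨(α, 1, α), ⟨h, h, by rw [S.actV_one]⟩⟩

/-- Specification of the multiplication of `S_{G,E}`:
`0` is absorbing; `(α,g,β)(γ,h,δ) = (α(g·ε), φ(g,ε)h, δ)` if `γ = βε`;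
`(α,g,β)(γ,h,δ) = (α, gφ(h⁻¹,ε)⁻¹, δ(h⁻¹·ε))` if `β = γε`; `0` otherwise. -/
def MulSpec (S : SelfSimGraph G V Ed) (mul : SGE S → SGE S → SGE S) : Prop :=
  (∀ t, mul none t = none) ∧
  (∀ s, mul s none = none) ∧
  (∀ (s t : SGETriple S) (ε : Pth V Ed),
     WFP S ε → rngP S ε = srcP S s.1.2.2 → t.1.1 = compP s.1.2.2 ε →
       sgeToRaw S (mul (some s) (some t)) =
         some (compP s.1.1 (actP S s.1.2.1 ε), phiP S s.1.2.1 ε * t.1.2.1, t.1.2.2)) ∧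
  (∀ (s t : SGETriple S) (ε : Pth V Ed),
     WFP S ε → rngP S ε = srcP S t.1.1 → s.1.2.2 = compP t.1.1 ε →
       sgeToRaw S (mul (some s) (some t)) =
         some (s.1.1, s.1.2.1 * (phiP S t.1.2.1⁻¹ ε)⁻¹,
               compP t.1.2.2 (actP S t.1.2.1⁻¹ ε))) ∧
  (∀ (s t : SGETriple S),
     (¬∃ ε, WFP S ε ∧ rngP S ε = srcP S s.1.2.2 ∧ t.1.1 = compP s.1.2.2 ε) →
     (¬∃ ε, WFP S ε ∧ rngP S ε = srcP S t.1.1 ∧ s.1.2.2 = compP t.1.1 ε) →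
       mul (some s) (some t) = none)

/-- Topological freeness of the standard action of `S_{G,E}` on `E^∞`: for every
nonzero `s = (α, g, β)`, every interior fixed point `ζ` of `s` satisfies `α = β`
and `ζ ∈ Z(ατ)` for some `τ` strongly fixed by `g`. -/
def TopFree (S : SelfSimGraph G V Ed) (act : G → (ℕ → Ed) → ℕ → Ed) : Prop :=
  ∀ (α : Pth V Ed) (g : G) (β : Pth V Ed),
    WFP S α → WFP S β → srcP S α = S.actV g (srcP S β) →
    ∀ ζ : InfPath S, ζ ∈ @interior (InfPath S) (infTop S) (FixSet S act α g β) →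
      α = β ∧ ∃ τ : Pth V Ed, WFP S τ ∧ rngP S τ = srcP S α ∧
        StronglyFixed S g τ ∧ InZ S (compP α τ) ζ.1

section Helpers

variable (S : SelfSimGraph G V Ed)

theorem lenP_comp (p q : Pth V Ed) : lenP (compP p q) = lenP p + lenP q := by
  induction p with
  | nil x => simp [compP, lenP]
  | cons e p ih => simp [compP, lenP, ih]; omega

theorem srcP_comp (p q : Pth V Ed) : srcP S (compP p q) = srcP S q := by
  induction p with
  | nil x => rfl
  | cons e p ih => exact ih

theorem compP_nil_src (p : Pth V Ed) : compP p (Pth.nil (srcP S p)) = p := by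
  induction p with
  | nil x => rfl
  | cons e p ih =>
    show Pth.cons e (compP p (Pth.nil (srcP S p))) = Pth.cons e p
    rw [ih]

theorem compP_assoc (p q r : Pth V Ed) : compP (compP p q) r = compP p (compP q r) := by
  induction p with
  | nil x => rfl
  | cons e p ih =>
    show Pth.cons e (compP (compP p q) r) = Pth.cons e (compP p (compP q r))
    rw [ih]

theorem rngP_comp (p q : Pth V Ed) (h : rngP S q = srcP S p) :
    rngP S (compP p q) = rngP S p := by
  cases p with
  | nil x => exact h
  | cons e p => rfl

theorem WFP_comp (p q : Pth V Ed) (hq : WFP S q) (h : rngP S q = srcP S p) :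
    WFP S p → WFP S (compP p q) := by
  induction p with
  | nil x => exact fun _ => hq
  | cons e p ih =>
    intro hp
    obtain ⟨h1, h2⟩ := hp
    exact ⟨by rw [rngP_comp S p q h]; exact h1, ih h h2⟩

theorem compP_inj (p : Pth V Ed) {q q' : Pth V Ed} (h : compP p q = compP p q') : q = q' := by
  induction p with
  | nil x => exact h
  | cons e p ih =>
    have h2 : Pth.cons e (compP p q) = Pth.cons e (compP p q') := h
    injection h2 with _ h3
    exact ih h3

theorem lenP_eq_zero {p : Pth V Ed} (h : lenP p = 0) : ∃ x, p = Pth.nil x := by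
  cases p with
  | nil x => exact ⟨x, rfl⟩
  | cons e p => simp [lenP] at h

theorem phi_one (e : Ed) : S.phi 1 e = 1 := by
  have h := S.phi_cocycle 1 1 e
  rw [one_mul, S.actE_one] at h
  exact (left_eq_mul.mp h)

theorem actP_one (p : Pth V Ed) : actP S 1 p = p := by
  induction p with
  | nil x => show Pth.nil (S.actV 1 x) = _; rw [S.actV_one]
  | cons e p ih =>
    show Pth.cons (S.actE 1 e) (actP S (S.phi 1 e) p) = _
    rw [S.actE_one, phi_one, ih]

theorem phiP_one (p : Pth V Ed) : phiP S 1 p = 1 := by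
  induction p with
  | nil x => rfl
  | cons e p ih =>
    show phiP S (S.phi 1 e) p = 1
    rw [phi_one]; exact ih

theorem actP_mul (g h : G) (p : Pth V Ed) : actP S (g * h) p = actP S g (actP S h p) := by
  induction p generalizing g h with
  | nil x =>
    show Pth.nil (S.actV (g * h) x) = Pth.nil (S.actV g (S.actV h x))
    rw [S.actV_mul]
  | cons e p ih =>
    show Pth.cons (S.actE (g * h) e) (actP S (S.phi (g * h) e) p)
       = Pth.cons (S.actE g (S.actE h e)) (actP S (S.phi g (S.actE h e)) (actP S (S.phi h e) p))
    rw [S.actE_mul, S.phi_cocycle, ih]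

theorem phiP_mul (g h : G) (p : Pth V Ed) :
    phiP S (g * h) p = phiP S g (actP S h p) * phiP S h p := by
  induction p generalizing g h with
  | nil x => rfl
  | cons e p ih =>
    show phiP S (S.phi (g * h) e) p
       = phiP S (S.phi g (S.actE h e)) (actP S (S.phi h e) p) * phiP S (S.phi h e) p
    rw [S.phi_cocycle, ih]

theorem actV_phiP (g : G) (p : Pth V Ed) (x : V) : S.actV (phiP S g p) x = S.actV g x := by
  induction p generalizing g with
  | nil y => rfl
  | cons e p ih =>
    show S.actV (phiP S (S.phi g e) p) x = _
    rw [ih, S.phi_vertex]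

theorem rngP_actP (g : G) (p : Pth V Ed) : rngP S (actP S g p) = S.actV g (rngP S p) := by
  cases p with
  | nil x => rfl
  | cons e p => exact S.r_act g e

theorem srcP_actP (g : G) (p : Pth V Ed) : srcP S (actP S g p) = S.actV g (srcP S p) := by
  induction p generalizing g with
  | nil x => rfl
  | cons e p ih =>
    show srcP S (actP S (S.phi g e) p) = _
    rw [ih, S.phi_vertex]; rfl

theorem lenP_actP (g : G) (p : Pth V Ed) : lenP (actP S g p) = lenP p := by
  induction p generalizing g with
  | nil x => rfl
  | cons e p ih =>
    show lenP (actP S (S.phi g e) p) + 1 = lenP p + 1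
    rw [ih]

theorem WFP_actP (g : G) (p : Pth V Ed) : WFP S p → WFP S (actP S g p) := by
  induction p generalizing g with
  | nil x => exact fun _ => trivial
  | cons e p ih =>
    intro hp
    obtain ⟨h1, h2⟩ := hp
    refine ⟨?_, ih _ h2⟩
    rw [S.d_act, h1, rngP_actP, S.phi_vertex]

theorem actP_inv_act (g : G) (p : Pth V Ed) : actP S g⁻¹ (actP S g p) = p := by
  rw [← actP_mul, inv_mul_cancel, actP_one]

theorem actP_act_inv (g : G) (p : Pth V Ed) : actP S g (actP S g⁻¹ p) = p := by
  rw [← actP_mul, mul_inv_cancel, actP_one]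

theorem phiP_inv (g : G) (p : Pth V Ed) : phiP S g⁻¹ (actP S g p) = (phiP S g p)⁻¹ := by
  have h := phiP_mul S g⁻¹ g p
  rw [inv_mul_cancel, phiP_one] at h
  exact eq_inv_of_mul_eq_one_left h.symm

theorem phiP_inv' (g : G) (p : Pth V Ed) : phiP S g (actP S g⁻¹ p) = (phiP S g⁻¹ p)⁻¹ := by
  have h := phiP_inv S g⁻¹ p
  rwa [inv_inv] at h

theorem actP_comp (g : G) (p q : Pth V Ed) :
    actP S g (compP p q) = compP (actP S g p) (actP S (phiP S g p) q) := by
  induction p generalizing g with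
  | nil x => rfl
  | cons e p ih =>
    show Pth.cons (S.actE g e) (actP S (S.phi g e) (compP p q))
       = Pth.cons (S.actE g e) (compP (actP S (S.phi g e) p) (actP S (phiP S (S.phi g e) p) q))
    rw [ih]

theorem phiP_comp (g : G) (p q : Pth V Ed) :
    phiP S g (compP p q) = phiP S (phiP S g p) q := by
  induction p generalizing g with
  | nil x => rfl
  | cons e p ih => exact ih _

theorem splitL (ε₁ ε₂ : Pth V Ed) (β₁ : Pth V Ed) :
    ∀ β₂ : Pth V Ed, WFP S β₂ → rngP S ε₁ = srcP S β₁ → rngP S ε₂ = srcP S β₂ →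
      compP β₁ ε₁ = compP β₂ ε₂ → lenP β₁ ≤ lenP β₂ →
      ∃ μ, WFP S μ ∧ rngP S μ = srcP S β₁ ∧ β₂ = compP β₁ μ ∧ ε₁ = compP μ ε₂ := by
  induction β₁ with
  | nil x =>
    intro β₂ hw hr₁ hr₂ heq _
    refine ⟨β₂, hw, ?_, rfl, heq⟩
    have h2 : rngP S (compP β₂ ε₂) = rngP S β₂ := rngP_comp S β₂ ε₂ hr₂
    rw [← h2, ← heq]
    exact hr₁
  | cons e p ih =>
    intro β₂ hw hr₁ hr₂ heq hlen
    cases β₂ with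
    | nil y => simp [lenP] at hlen
    | cons e' p' =>
      have heq2 : Pth.cons e (compP p ε₁) = Pth.cons e' (compP p' ε₂) := heq
      injection heq2 with he heq3
      obtain ⟨hw1, hw2⟩ := hw
      obtain ⟨μ, h1, h2, h3, h4⟩ := ih p' hw2 hr₁ hr₂ heq3
        (by simp only [lenP] at hlen; omega)
      subst he
      refine ⟨μ, h1, h2, ?_, h4⟩
      show Pth.cons e p' = Pth.cons e (compP p μ)
      rw [h3]

end Helpers

section Rep

variable (S : SelfSimGraph G V Ed)

open Classical in
/-- The partial transformation of `Pth V Ed × G` attached to a triple `(α,g,β)`. -/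
noncomputable def Tmap (α : Pth V Ed) (g : G) (β : Pth V Ed) :
    Pth V Ed × G → Option (Pth V Ed × G) := fun x =>
  if h : ∃ ε, WFP S ε ∧ rngP S ε = srcP S β ∧ x.1 = compP β ε then
    some (compP α (actP S g h.choose), phiP S g h.choose * x.2)
  else none

noncomputable def Tsge : SGE S → Pth V Ed × G → Option (Pth V Ed × G)
  | none => fun _ => none
  | some s => Tmap S s.1.1 s.1.2.1 s.1.2.2

theorem Tsge_none : Tsge S none = fun _ => none := rfl

theorem Tsge_mk (α : Pth V Ed) (g : G) (β : Pth V Ed) (hs) :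
    Tsge S (some ⟨(α, g, β), hs⟩) = Tmap S α g β := rfl

theorem Tmap_spec (α : Pth V Ed) (g : G) (β : Pth V Ed) {ε : Pth V Ed}
    (h1 : WFP S ε) (h2 : rngP S ε = srcP S β) (x : Pth V Ed × G) (hx : x.1 = compP β ε) :
    Tmap S α g β x = some (compP α (actP S g ε), phiP S g ε * x.2) := by
  have hex : ∃ ε, WFP S ε ∧ rngP S ε = srcP S β ∧ x.1 = compP β ε := ⟨ε, h1, h2, hx⟩
  have hch : hex.choose = ε :=
    compP_inj β (hex.choose_spec.2.2.symm.trans hx)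
  simp only [Tmap]
  rw [dif_pos hex, hch]

theorem Tmap_none (α : Pth V Ed) (g : G) (β : Pth V Ed) (x : Pth V Ed × G)
    (h : ¬∃ ε, WFP S ε ∧ rngP S ε = srcP S β ∧ x.1 = compP β ε) :
    Tmap S α g β x = none := by
  simp only [Tmap]
  rw [dif_neg h]

theorem Tmap_dom {α : Pth V Ed} {g : G} {β : Pth V Ed} {x y : Pth V Ed × G}
    (h : Tmap S α g β x = some y) :
    ∃ ε, WFP S ε ∧ rngP S ε = srcP S β ∧ x.1 = compP β ε := by
  by_cases hc : ∃ ε, WFP S ε ∧ rngP S ε = srcP S β ∧ x.1 = compP β ε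
  · exact hc
  · rw [Tmap_none S α g β x hc] at h
    exact absurd h (by simp)

theorem Tmap_base (α : Pth V Ed) (g : G) (β : Pth V Ed)
    (hs : srcP S α = S.actV g (srcP S β)) :
    Tmap S α g β (β, 1) = some (α, g) := by
  rw [Tmap_spec S α g β (ε := Pth.nil (srcP S β)) trivial rfl (β, 1) (compP_nil_src S β).symm]
  show some (compP α (Pth.nil (S.actV g (srcP S β))), phiP S g (Pth.nil (srcP S β)) * 1) = _
  rw [← hs, compP_nil_src, mul_one]
  rfl

theorem sge_eq_of_raw {z : SGE S} {r : Pth V Ed × G × Pth V Ed}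
    (h : sgeToRaw S z = some r) : ∃ pf, z = some ⟨r, pf⟩ := by
  cases z with
  | none => cases h
  | some s =>
    obtain ⟨v, pf⟩ := s
    replace h : v = r := Option.some.inj h
    subst h
    exact ⟨pf, rfl⟩

theorem Tsge_inj {a b : SGE S} (hab : Tsge S a = Tsge S b) : a = b := by
  cases a with
  | none =>
    cases b with
    | none => rfl
    | some t =>
      obtain ⟨⟨α, g, β⟩, h1, h2, h3⟩ := t
      have h := congrFun hab (β, 1)
      rw [Tsge_none, Tsge_mk, Tmap_base S α g β h3] at h
      simp at h
  | some s =>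
    obtain ⟨⟨α₁, g₁, β₁⟩, ha1, ha2, ha3⟩ := s
    cases b with
    | none =>
      have h := congrFun hab (β₁, 1)
      rw [Tsge_none, Tsge_mk, Tmap_base S α₁ g₁ β₁ ha3] at h
      simp at h
    | some t =>
      obtain ⟨⟨α₂, g₂, β₂⟩, hb1, hb2, hb3⟩ := t
      have h1 := congrFun hab (β₁, 1)
      rw [Tsge_mk, Tsge_mk, Tmap_base S α₁ g₁ β₁ ha3] at h1
      have h2 := congrFun hab.symm (β₂, 1)
      rw [Tsge_mk, Tsge_mk, Tmap_base S α₂ g₂ β₂ hb3] at h2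
      obtain ⟨ε₁, hw₁, hr₁, hc₁⟩ := Tmap_dom S h1.symm
      obtain ⟨ε₂, hw₂, hr₂, hc₂⟩ := Tmap_dom S h2.symm
      replace hc₁ : β₁ = compP β₂ ε₁ := hc₁
      replace hc₂ : β₂ = compP β₁ ε₂ := hc₂
      have hl₁ := congrArg lenP hc₁
      have hl₂ := congrArg lenP hc₂
      rw [lenP_comp] at hl₁ hl₂
      have hz : lenP ε₁ = 0 := by omega
      obtain ⟨y, hy⟩ := lenP_eq_zero hz
      subst hy
      have hy2 : y = srcP S β₂ := hr₁
      subst hy2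
      have hββ : β₁ = β₂ := by rw [hc₁, compP_nil_src]
      subst hββ
      rw [Tmap_base S α₂ g₂ β₁ hb3] at h1
      injection h1 with h1
      injection h1 with hα hg
      subst hα; subst hg
      rfl

end Rep

section MulDef

variable (S : SelfSimGraph G V Ed)

theorem pf_case1 (s t : SGETriple S) {ε : Pth V Ed}
    (h1 : WFP S ε) (h2 : rngP S ε = srcP S s.1.2.2) (h3 : t.1.1 = compP s.1.2.2 ε) :
    WFP S (compP s.1.1 (actP S s.1.2.1 ε)) ∧ WFP S t.1.2.2 ∧
      srcP S (compP s.1.1 (actP S s.1.2.1 ε)) =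
        S.actV (phiP S s.1.2.1 ε * t.1.2.1) (srcP S t.1.2.2) := by
  obtain ⟨hs1, hs2, hs3⟩ := s.2
  obtain ⟨ht1, ht2, ht3⟩ := t.2
  refine ⟨WFP_comp S _ _ (WFP_actP S _ _ h1) ?_ hs1, ht2, ?_⟩
  · rw [rngP_actP, h2, ← hs3]
  · rw [srcP_comp, srcP_actP]
    have hε : srcP S ε = srcP S t.1.1 := by rw [h3, srcP_comp]
    rw [hε, ht3, S.actV_mul, actV_phiP, ← S.actV_mul]

theorem pf_case2 (s t : SGETriple S) {ε : Pth V Ed}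
    (h1 : WFP S ε) (h2 : rngP S ε = srcP S t.1.1) (h3 : s.1.2.2 = compP t.1.1 ε) :
    WFP S s.1.1 ∧ WFP S (compP t.1.2.2 (actP S t.1.2.1⁻¹ ε)) ∧
      srcP S s.1.1 = S.actV (s.1.2.1 * (phiP S t.1.2.1⁻¹ ε)⁻¹)
        (srcP S (compP t.1.2.2 (actP S t.1.2.1⁻¹ ε))) := by
  obtain ⟨hs1, hs2, hs3⟩ := s.2
  obtain ⟨ht1, ht2, ht3⟩ := t.2
  have hsd : S.actV t.1.2.1⁻¹ (srcP S t.1.1) = srcP S t.1.2.2 := by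
    rw [ht3, ← S.actV_mul, inv_mul_cancel, S.actV_one]
  refine ⟨hs1, WFP_comp S _ _ (WFP_actP S _ _ h1) ?_ ht2, ?_⟩
  · rw [rngP_actP, h2, hsd]
  · rw [srcP_comp, srcP_actP]
    have hε : srcP S ε = srcP S s.1.2.2 := by rw [h3, srcP_comp]
    rw [hε, hs3, S.actV_mul]
    congr 1
    rw [← S.actV_mul]
    have inj : ∀ (a : G) (u v : V), S.actV a u = S.actV a v → u = v := by
      intro a u v h
      have h2 := congrArg (S.actV a⁻¹) h
      rwa [← S.actV_mul, ← S.actV_mul, inv_mul_cancel, S.actV_one, S.actV_one] at h2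
    apply inj (phiP S t.1.2.1⁻¹ ε)
    rw [← S.actV_mul, ← mul_assoc, mul_inv_cancel, one_mul, actV_phiP]

open Classical in
noncomputable def mulDef : SGE S → SGE S → SGE S
  | none, _ => none
  | some _, none => none
  | some s, some t =>
    if h1 : ∃ ε, WFP S ε ∧ rngP S ε = srcP S s.1.2.2 ∧ t.1.1 = compP s.1.2.2 ε then
      some ⟨(compP s.1.1 (actP S s.1.2.1 h1.choose),
             phiP S s.1.2.1 h1.choose * t.1.2.1, t.1.2.2),
        pf_case1 S s t h1.choose_spec.1 h1.choose_spec.2.1 h1.choose_spec.2.2⟩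
    else if h2 : ∃ ε, WFP S ε ∧ rngP S ε = srcP S t.1.1 ∧ s.1.2.2 = compP t.1.1 ε then
      some ⟨(s.1.1, s.1.2.1 * (phiP S t.1.2.1⁻¹ h2.choose)⁻¹,
             compP t.1.2.2 (actP S t.1.2.1⁻¹ h2.choose)),
        pf_case2 S s t h2.choose_spec.1 h2.choose_spec.2.1 h2.choose_spec.2.2⟩
    else none

/-- When both case conditions hold, both extensions are trivial. -/
theorem both_cases (s t : SGETriple S) {ε₁ ε₂ : Pth V Ed}
    (h2 : rngP S ε₁ = srcP S s.1.2.2) (h3 : t.1.1 = compP s.1.2.2 ε₁)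
    (k2 : rngP S ε₂ = srcP S t.1.1) (k3 : s.1.2.2 = compP t.1.1 ε₂) :
    ε₁ = Pth.nil (srcP S s.1.2.2) ∧ ε₂ = Pth.nil (srcP S t.1.1) ∧
      t.1.1 = s.1.2.2 := by
  have hc : s.1.2.2 = compP s.1.2.2 (compP ε₁ ε₂) := by
    rw [← compP_assoc, ← h3, ← k3]
  have hl := congrArg lenP hc
  rw [lenP_comp, lenP_comp] at hl
  have hz1 : lenP ε₁ = 0 := by omega
  have hz2 : lenP ε₂ = 0 := by omega
  obtain ⟨y1, hy1⟩ := lenP_eq_zero hz1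
  obtain ⟨y2, hy2⟩ := lenP_eq_zero hz2
  subst hy1; subst hy2
  have e1 : y1 = srcP S s.1.2.2 := h2
  have e2 : y2 = srcP S t.1.1 := k2
  subst e1; subst e2
  refine ⟨rfl, rfl, ?_⟩
  rw [h3, compP_nil_src]

theorem sgeToRaw_mk (r : Pth V Ed × G × Pth V Ed) (pf) :
    sgeToRaw S (some ⟨r, pf⟩ : SGE S) = some r := rfl

theorem mulDef_spec : MulSpec S (mulDef S) := by
  refine ⟨fun t => rfl, fun s => by cases s <;> rfl, ?_, ?_, ?_⟩
  · intro s t ε hw hr hc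
    have hex : ∃ ε, WFP S ε ∧ rngP S ε = srcP S s.1.2.2 ∧ t.1.1 = compP s.1.2.2 ε :=
      ⟨ε, hw, hr, hc⟩
    have hch : hex.choose = ε := compP_inj s.1.2.2 (hex.choose_spec.2.2.symm.trans hc)
    show sgeToRaw S (mulDef S (some s) (some t)) = _
    simp only [mulDef]
    erw [dif_pos hex, sgeToRaw_mk, hch]
  · intro s t ε hw hr hc
    show sgeToRaw S (mulDef S (some s) (some t)) = _
    simp only [mulDef]
    by_cases hex1 : ∃ ε, WFP S ε ∧ rngP S ε = srcP S s.1.2.2 ∧ t.1.1 = compP s.1.2.2 ε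
    · obtain ⟨hq1, hq2, hq3⟩ := hex1.choose_spec
      obtain ⟨e1, e2, e3⟩ := both_cases S s t hq2 hq3 hr hc
      erw [dif_pos hex1, sgeToRaw_mk, e1]
      obtain ⟨hs1, hs2, hs3⟩ := s.2
      obtain ⟨ht1, ht2, ht3⟩ := t.2
      refine congrArg some (Prod.ext ?_ (Prod.ext ?_ ?_)) <;> simp only
      · show compP s.1.1 (Pth.nil (S.actV s.1.2.1 (srcP S s.1.2.2))) = s.1.1
        rw [← hs3, compP_nil_src]
      · show phiP S s.1.2.1 (Pth.nil (srcP S s.1.2.2)) * t.1.2.1 = _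
        have : phiP S s.1.2.1 (Pth.nil (srcP S s.1.2.2)) = s.1.2.1 := rfl
        rw [this]
        congr 1
        rw [e2]
        show t.1.2.1 = ((t.1.2.1)⁻¹)⁻¹
        rw [inv_inv]
      · show t.1.2.2 = compP t.1.2.2 (actP S t.1.2.1⁻¹ ε)
        rw [e2]
        show t.1.2.2 = compP t.1.2.2 (Pth.nil (S.actV t.1.2.1⁻¹ (srcP S t.1.1)))
        rw [ht3, ← S.actV_mul, inv_mul_cancel, S.actV_one, compP_nil_src]
    · erw [dif_neg hex1]
      have hex2 : ∃ ε, WFP S ε ∧ rngP S ε = srcP S t.1.1 ∧ s.1.2.2 = compP t.1.1 ε :=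
        ⟨ε, hw, hr, hc⟩
      have hch : hex2.choose = ε := compP_inj t.1.1 (hex2.choose_spec.2.2.symm.trans hc)
      erw [dif_pos hex2, sgeToRaw_mk, hch]
  · intro s t h1 h2
    show mulDef S (some s) (some t) = none
    simp only [mulDef]
    erw [dif_neg h1, dif_neg h2]

end MulDef

section Hom

variable (S : SelfSimGraph G V Ed)

theorem Tsge_hom (mul : SGE S → SGE S → SGE S) (hmul : MulSpec S mul) (a b : SGE S)
    (x : Pth V Ed × G) :
    Tsge S (mul a b) x = (Tsge S b x).bind (Tsge S a) := by
  obtain ⟨hm0l, hm0r, hm1, hm2, hm3⟩ := hmul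
  cases a with
  | none =>
    rw [hm0l, Tsge_none]
    rcases Tsge S b x with _ | y <;> rfl
  | some s =>
    cases b with
    | none =>
      erw [hm0r, Tsge_none]
      rfl
    | some t =>
      obtain ⟨⟨α, g, β⟩, hsw⟩ := s
      obtain ⟨⟨γ, h, δ⟩, htw⟩ := t
      obtain ⟨θ, k⟩ := x
      obtain ⟨hαw, hβw, hαβ⟩ := hsw
      obtain ⟨hγw, hδw, hγδ⟩ := htw
      simp only [Tsge_mk]
      by_cases hA : ∃ ε, WFP S ε ∧ rngP S ε = srcP S β ∧ γ = compP β ε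
      · obtain ⟨ε₀, hε₀w, hε₀r, hε₀c⟩ := hA
        have hraw := hm1 ⟨(α, g, β), hαw, hβw, hαβ⟩ ⟨(γ, h, δ), hγw, hδw, hγδ⟩ ε₀ hε₀w hε₀r hε₀c
        dsimp only at hraw
        obtain ⟨pf, hmse⟩ := sge_eq_of_raw S hraw
        rw [hmse]
        simp only [Tsge_mk]
        have hsγ : srcP S γ = srcP S ε₀ := by rw [hε₀c, srcP_comp]
        by_cases hB : ∃ ε', WFP S ε' ∧ rngP S ε' = srcP S δ ∧ θ = compP δ ε'
        · obtain ⟨ε', hB1, hB2, hB3⟩ := hB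
          rw [Tmap_spec S γ h δ hB1 hB2 (θ, k) hB3]
          simp only [Option.bind_some]
          rw [Tmap_spec S (compP α (actP S g ε₀)) (phiP S g ε₀ * h) δ hB1 hB2 (θ, k) hB3]
          have rngc : rngP S (actP S h ε') = srcP S ε₀ := by
            rw [rngP_actP, hB2, ← hγδ, hsγ]
          rw [Tmap_spec S α g β (ε := compP ε₀ (actP S h ε'))
                (WFP_comp S ε₀ (actP S h ε') (WFP_actP S h ε' hB1) rngc hε₀w)
                (by rw [rngP_comp S ε₀ (actP S h ε') rngc, hε₀r])
                (compP γ (actP S h ε'), phiP S h ε' * k)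
                (by show compP γ (actP S h ε') = _; rw [hε₀c, compP_assoc])]
          rw [actP_comp, ← actP_mul, ← compP_assoc, phiP_comp, phiP_mul, mul_assoc]
        · rw [Tmap_none S γ h δ (θ, k) hB, Tmap_none S _ _ δ (θ, k) hB]
          rfl
      · by_cases hC : ∃ ε, WFP S ε ∧ rngP S ε = srcP S γ ∧ β = compP γ ε
        · obtain ⟨ε₀, hε₀w, hε₀r, hε₀c⟩ := hC
          have hraw := hm2 ⟨(α, g, β), hαw, hβw, hαβ⟩ ⟨(γ, h, δ), hγw, hδw, hγδ⟩ ε₀ hε₀w hε₀r hε₀c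
          dsimp only at hraw
          obtain ⟨pf, hmse⟩ := sge_eq_of_raw S hraw
          rw [hmse]
          simp only [Tsge_mk]
          have hsβ : srcP S β = srcP S ε₀ := by rw [hε₀c, srcP_comp]
          have hδν : S.actV h⁻¹ (srcP S γ) = srcP S δ := by
            rw [hγδ, ← S.actV_mul, inv_mul_cancel, S.actV_one]
          have hνw : WFP S (actP S h⁻¹ ε₀) := WFP_actP S h⁻¹ ε₀ hε₀w
          have hνr : rngP S (actP S h⁻¹ ε₀) = srcP S δ := by rw [rngP_actP, hε₀r, hδν]
          have hνs : srcP S (actP S h⁻¹ ε₀) = S.actV h⁻¹ (srcP S ε₀) := srcP_actP S h⁻¹ ε₀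
          by_cases hB : ∃ ε', WFP S ε' ∧ rngP S ε' = srcP S δ ∧ θ = compP δ ε'
          · obtain ⟨ε', hB1, hB2, hB3⟩ := hB
            rw [Tmap_spec S γ h δ hB1 hB2 (θ, k) hB3]
            simp only [Option.bind_some]
            by_cases hD : ∃ μ, WFP S μ ∧ rngP S μ = srcP S (actP S h⁻¹ ε₀) ∧
                ε' = compP (actP S h⁻¹ ε₀) μ
            · obtain ⟨ε'', hD1, hD2, hD3⟩ := hD
              rw [Tmap_spec S α (g * (phiP S h⁻¹ ε₀)⁻¹) (compP δ (actP S h⁻¹ ε₀)) (ε := ε'')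
                    hD1 (by rw [srcP_comp]; exact hD2) (θ, k)
                    (by show θ = _; rw [hB3, hD3, compP_assoc])]
              rw [Tmap_spec S α g β (ε := actP S (phiP S h (actP S h⁻¹ ε₀)) ε'')
                    (WFP_actP S _ _ hD1)
                    (by rw [rngP_actP, hD2, hνs, actV_phiP, ← S.actV_mul, mul_inv_cancel,
                          S.actV_one, hsβ])
                    (compP γ (actP S h ε'), phiP S h ε' * k)
                    (by show compP γ (actP S h ε') = _
                        rw [hD3, actP_comp, actP_act_inv, ← compP_assoc, ← hε₀c])]
              rw [← phiP_inv' S h ε₀, actP_mul, phiP_mul, mul_assoc, hD3, phiP_comp]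
            · have hL : ¬∃ μ, WFP S μ ∧ rngP S μ = srcP S (compP δ (actP S h⁻¹ ε₀)) ∧
                  (θ, k).1 = compP (compP δ (actP S h⁻¹ ε₀)) μ := by
                rintro ⟨μ, hμ1, hμ2, hμ3⟩
                refine hD ⟨μ, hμ1, by rwa [srcP_comp] at hμ2, ?_⟩
                apply compP_inj δ
                rw [← hB3, ← compP_assoc]
                exact hμ3
              have hR : ¬∃ ε2, WFP S ε2 ∧ rngP S ε2 = srcP S β ∧
                  (compP γ (actP S h ε'), phiP S h ε' * k).1 = compP β ε2 := by
                rintro ⟨ε2, hμ1, hμ2, hμ3⟩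
                have hμ3' : compP γ (actP S h ε') = compP γ (compP ε₀ ε2) := by
                  rw [← compP_assoc, ← hε₀c]; exact hμ3
                have h5 : actP S h ε' = compP ε₀ ε2 := compP_inj γ hμ3'
                have h6 : ε' = compP (actP S h⁻¹ ε₀) (actP S (phiP S h⁻¹ ε₀) ε2) := by
                  have h7 := congrArg (actP S h⁻¹) h5
                  rwa [actP_inv_act, actP_comp] at h7
                refine hD ⟨actP S (phiP S h⁻¹ ε₀) ε2, WFP_actP S _ _ hμ1, ?_, h6⟩
                rw [rngP_actP, hμ2, actV_phiP, hνs, hsβ]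
              rw [Tmap_none S _ _ _ (θ, k) hL, Tmap_none S α g β _ hR]
          · have hL : ¬∃ μ, WFP S μ ∧ rngP S μ = srcP S (compP δ (actP S h⁻¹ ε₀)) ∧
                (θ, k).1 = compP (compP δ (actP S h⁻¹ ε₀)) μ := by
              rintro ⟨μ, h1, h2, h3⟩
              replace h3 : θ = compP (compP δ (actP S h⁻¹ ε₀)) μ := h3
              rw [srcP_comp] at h2
              refine hB ⟨compP (actP S h⁻¹ ε₀) μ, WFP_comp S _ μ h1 h2 hνw, ?_, ?_⟩
              · rw [rngP_comp S _ μ h2, hνr]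
              · rw [h3, compP_assoc]
            rw [Tmap_none S _ _ _ (θ, k) hL, Tmap_none S γ h δ (θ, k) hB]
            rfl
        · rw [hm3 ⟨(α, g, β), hαw, hβw, hαβ⟩ ⟨(γ, h, δ), hγw, hδw, hγδ⟩ hA hC, Tsge_none]
          by_cases hB : ∃ ε', WFP S ε' ∧ rngP S ε' = srcP S δ ∧ θ = compP δ ε'
          · obtain ⟨ε', hB1, hB2, hB3⟩ := hB
            rw [Tmap_spec S γ h δ hB1 hB2 (θ, k) hB3]
            simp only [Option.bind_some]
            have rngc : rngP S (actP S h ε') = srcP S γ := by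
              rw [rngP_actP, hB2]; exact hγδ.symm
            have hno : ¬∃ ε2, WFP S ε2 ∧ rngP S ε2 = srcP S β ∧
                (compP γ (actP S h ε'), phiP S h ε' * k).1 = compP β ε2 := by
              rintro ⟨ε2, h1, h2, h3⟩
              replace h3 : compP γ (actP S h ε') = compP β ε2 := h3
              rcases Nat.le_total (lenP β) (lenP γ) with hle | hle
              · obtain ⟨μ, m1, m2, m3, _⟩ := splitL S ε2 (actP S h ε') β γ hγw h2 rngc h3.symm hle
                exact hA ⟨μ, m1, m2, m3⟩
              · obtain ⟨μ, m1, m2, m3, _⟩ := splitL S (actP S h ε') ε2 γ β hβw rngc h2 h3 hle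
                exact hC ⟨μ, m1, m2, m3⟩
            rw [Tmap_none S α g β _ hno]
          · rw [Tmap_none S γ h δ (θ, k) hB]
            rfl

end Hom

section Final

variable (S : SelfSimGraph G V Ed)

theorem Tsge_star_mk (α : Pth V Ed) (g : G) (β : Pth V Ed) (hs) :
    Tsge S (starSGE S (some ⟨(α, g, β), hs⟩)) = Tmap S β g⁻¹ α := rfl

theorem SGE_star_star (a : SGE S) : starSGE S (starSGE S a) = a := by
  cases a with
  | none => rfl
  | some s =>
    obtain ⟨⟨α, g, β⟩, hs⟩ := s
    apply congrArg some
    apply Subtype.ext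
    show (α, (g⁻¹)⁻¹, β) = (α, g, β)
    rw [inv_inv]

theorem SGE_sss (mul : SGE S → SGE S → SGE S) (hmul : MulSpec S mul) (a : SGE S) :
    mul (mul a (starSGE S a)) a = a := by
  apply Tsge_inj S
  funext x
  rw [Tsge_hom S mul hmul (mul a (starSGE S a)) a x]
  cases a with
  | none => rfl
  | some s =>
    obtain ⟨⟨α, g, β⟩, hαw, hβw, hαβ⟩ := s
    simp only [Tsge_mk]
    cases hax : Tmap S α g β x with
    | none => rfl
    | some y =>
      simp only [Option.bind_some]
      rw [Tsge_hom S mul hmul (some ⟨(α, g, β), hαw, hβw, hαβ⟩)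
            (starSGE S (some ⟨(α, g, β), hαw, hβw, hαβ⟩)) y]
      simp only [Tsge_star_mk, Tsge_mk]
      obtain ⟨ε, hw, hr, hc⟩ := Tmap_dom S hax
      rw [Tmap_spec S α g β hw hr x hc] at hax
      have hy := Option.some.inj hax
      subst hy
      rw [Tmap_spec S β g⁻¹ α (ε := actP S g ε) (WFP_actP S g ε hw)
            (by rw [rngP_actP, hr]; exact hαβ.symm)
            (compP α (actP S g ε), phiP S g ε * x.2) rfl]
      rw [actP_inv_act, phiP_inv, inv_mul_cancel_left]
      simp only [Option.bind_some]
      rw [Tmap_spec S α g β hw hr (compP β ε, x.2) rfl]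

theorem idem_partialId (mul : SGE S → SGE S → SGE S) (hmul : MulSpec S mul) (e : SGE S)
    (he : mul e e = e) : ∀ x y, Tsge S e x = some y → y = x := by
  cases e with
  | none => intro x y hxy; exact absurd hxy (by rw [Tsge_none]; simp)
  | some s =>
    obtain ⟨⟨α, g, β⟩, hαw, hβw, hαβ⟩ := s
    have hkey := Tsge_hom S mul hmul (some ⟨(α, g, β), hαw, hβw, hαβ⟩)
      (some ⟨(α, g, β), hαw, hβw, hαβ⟩) (β, 1)
    rw [he] at hkey
    simp only [Tsge_mk] at hkey
    rw [Tmap_base S α g β hαβ] at hkey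
    simp only [Option.bind_some] at hkey
    obtain ⟨ε, hw, hr, hc⟩ := Tmap_dom S hkey.symm
    replace hc : α = compP β ε := hc
    rw [Tmap_spec S α g β hw hr (α, g) hc] at hkey
    have hkey2 := Option.some.inj hkey
    have hpath : α = compP α (actP S g ε) := congrArg Prod.fst hkey2
    have hgrp : g = phiP S g ε * g := congrArg Prod.snd hkey2
    have hl := congrArg lenP hpath
    rw [lenP_comp, lenP_actP] at hl
    have hz : lenP ε = 0 := by omega
    obtain ⟨y0, hy0⟩ := lenP_eq_zero hz
    subst hy0
    have hy1 : y0 = srcP S β := hr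
    subst hy1
    have hαβ' : α = β := by rw [hc, compP_nil_src]
    have hgg : g = g * g := hgrp
    have hg1 : g = 1 := left_eq_mul.mp hgg
    intro x y hxy
    rw [Tsge_mk] at hxy
    obtain ⟨ε2, hw2, hr2, hcx⟩ := Tmap_dom S hxy
    rw [Tmap_spec S α g β hw2 hr2 x hcx] at hxy
    have hxy2 := Option.some.inj hxy
    rw [← hxy2, hg1, actP_one, phiP_one, one_mul, hαβ', ← hcx]

theorem idem_comm (mul : SGE S → SGE S → SGE S) (hmul : MulSpec S mul) (e f : SGE S)
    (he : mul e e = e) (hf : mul f f = f) : mul e f = mul f e := by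
  have pe := idem_partialId S mul hmul e he
  have pf := idem_partialId S mul hmul f hf
  apply Tsge_inj S
  funext x
  rw [Tsge_hom S mul hmul e f x, Tsge_hom S mul hmul f e x]
  cases hfx : Tsge S f x with
  | none =>
    cases hex : Tsge S e x with
    | none => rfl
    | some y =>
      have hyx := pe x y hex
      subst hyx
      simp only [Option.bind_none, Option.bind_some]
      exact hfx.symm
  | some y =>
    have hyx := pf x y hfx
    rw [hyx] at hfx ⊢
    cases hex : Tsge S e x with
    | none =>
      simp only [Option.bind_none, Option.bind_some]
      exact hex
    | some z =>
      have hzx := pe x z hex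
      rw [hzx] at hex ⊢
      simp only [Option.bind_some]
      rw [hex, hfx]

theorem SGE_assoc (mul : SGE S → SGE S → SGE S) (hmul : MulSpec S mul) (a b c : SGE S) :
    mul (mul a b) c = mul a (mul b c) := by
  apply Tsge_inj S
  funext x
  rw [Tsge_hom S mul hmul (mul a b) c x, Tsge_hom S mul hmul a (mul b c) x,
      Tsge_hom S mul hmul b c x]
  have hab : Tsge S (mul a b) = fun y => (Tsge S b y).bind (Tsge S a) :=
    funext fun y => Tsge_hom S mul hmul a b y
  rw [hab]
  cases Tsge S c x with
  | none => rfl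
  | some y => simp only [Option.bind_some]

end Final

/-- `S_{G,E}` is an inverse semigroup with zero: the multiplication is well
defined (there exists a multiplication satisfying all the defining case rules)
and, for any such multiplication, it is associative, every `s` satisfies
`s s* s = s` and `s* s s* = s*`, and idempotents commute. -/
theorem statement1 {G V Ed : Type} [Group G] [Fintype V] [Fintype Ed]
    (S : SelfSimGraph G V Ed) (hNoSources : ∀ x : V, ∃ e : Ed, S.r e = x) :
    (∃ mul : SGE S → SGE S → SGE S, MulSpec S mul) ∧
    (∀ mul : SGE S → SGE S → SGE S, MulSpec S mul →
      (∀ a b c : SGE S, mul (mul a b) c = mul a (mul b c)) ∧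
      (∀ a : SGE S, mul (mul a (starSGE S a)) a = a) ∧
      (∀ a : SGE S, mul (mul (starSGE S a) a) (starSGE S a) = starSGE S a) ∧
      (∀ e f : SGE S, mul e e = e → mul f f = f → mul e f = mul f e)) := by
  refine ⟨⟨mulDef S, mulDef_spec S⟩, ?_⟩
  intro mul hmul
  refine ⟨SGE_assoc S mul hmul, SGE_sss S mul hmul, ?_, idem_comm S mul hmul⟩
  intro a
  have h := SGE_sss S mul hmul (starSGE S a)
  rwa [SGE_star_star] at h
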